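/- If the messages of a topological interference management problem can be partitioned into n subsets each of whose induced demand graphs is acyclic, and an orthogonal set of n messages exists (one per subset), then the optimal sum degrees of freedom equals exactly n. -/
import Mathlib


/-- The demand graph induced by a subset `A` of the messages (with `src`,
`dst`, `heard` describing the network) has an alternating cycle: a closed
cyclic sequence of distinct sources and distinct destinations alternating
non-hearing edges with desired edges corresponding to messages of `A`. -/
def HasAltCycleOn {M S D : Type*} (src : M → S) (dst : M → D)
    (heard : S → D → Prop) (A : Set M) : Prop :=
  ∃ (c : ℕ) (s : Fin (c + 1) → S) (d : Fin (c + 1) → D),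
    Function.Injective s ∧ Function.Injective d ∧
    ∀ k, ¬ heard (s k) (d k) ∧ ∃ m ∈ A, src m = s k ∧ dst m = d (k + 1)

/-- A set of messages is orthogonal if the involved sources are distinct, the
involved destinations are distinct, and no involved destination hears any
involved source other than its own. -/
def IsOrthFam {M S D : Type*} (src : M → S) (dst : M → D)
    (heard : S → D → Prop) (A : Set M) : Prop :=
  ∀ m ∈ A, ∀ m' ∈ A, m ≠ m' → src m ≠ src m' ∧ dst m ≠ dst m' ∧ ¬ heard (src m') (dst m)

/-- Consider a TIM problem with message set `M` and optimal sum-DoF function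
`DoF` on message subsets, satisfying: the acyclic demand set bound (subsets
with acyclic demand graph have sum-DoF at most 1), subadditivity over disjoint
subsets, and achievability of any orthogonal set's cardinality.  If the
messages partition into `n` subsets each inducing an acyclic demand graph, and
there is an orthogonal set of `n` messages, one per subset, then the optimal
sum-DoF equals exactly `n`. -/
theorem stmt9 {M S D : Type*} (src : M → S) (dst : M → D) (heard : S → D → Prop)
    (DoF : Set M → ℝ)
    (hacyc_bound : ∀ A : Set M, ¬ HasAltCycleOn src dst heard A → DoF A ≤ 1)
    (hsub : ∀ A B : Set M, Disjoint A B → DoF (A ∪ B) ≤ DoF A + DoF B)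
    (hach : ∀ A : Set M, IsOrthFam src dst heard A → (A.ncard : ℝ) ≤ DoF Set.univ)
    (n : ℕ) (hn : 0 < n) (P : Fin n → Set M)
    (hcover : ∀ m : M, ∃! k : Fin n, m ∈ P k)
    (hacyc : ∀ k : Fin n, ¬ HasAltCycleOn src dst heard (P k))
    (O : Set M) (hO : IsOrthFam src dst heard O)
    (hOper : ∀ k : Fin n, ∃! m : M, m ∈ O ∩ P k) :
    DoF Set.univ = n := by
  -- pairwise disjointness of the partition
  have hdisj : ∀ k k' : Fin n, k ≠ k' → Disjoint (P k) (P k') := by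
    intro k k' hkk'
    rw [Set.disjoint_left]
    intro m hm hm'
    obtain ⟨j, _, hj⟩ := hcover m
    exact hkk' ((hj k hm).trans (hj k' hm').symm)
  -- upper bound over finite index sets
  have key : ∀ s : Finset (Fin n), s.Nonempty → DoF (⋃ k ∈ s, P k) ≤ s.card := by
    intro s
    induction s using Finset.cons_induction with
    | empty => intro h; exact absurd rfl h.ne_empty
    | cons a s ha ih =>
      intro _
      rcases s.eq_empty_or_nonempty with rfl | hs
      · simp only [Finset.cons_empty, Finset.mem_singleton, Set.iUnion_iUnion_eq_left,
          Finset.card_singleton, Nat.cast_one]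
        exact hacyc_bound _ (hacyc a)
      · have hU : (⋃ k ∈ Finset.cons a s ha, P k) = P a ∪ ⋃ k ∈ s, P k := by
          simp [Finset.mem_cons, Set.iUnion_or, Set.iUnion_union_distrib]
        have hd : Disjoint (P a) (⋃ k ∈ s, P k) := by
          refine Set.disjoint_iUnion₂_right.mpr ?_
          intro k hk
          exact hdisj a k (fun h => ha (h ▸ hk))
        calc DoF (⋃ k ∈ Finset.cons a s ha, P k) ≤ DoF (P a) + DoF (⋃ k ∈ s, P k) := by
              rw [hU]; exact hsub _ _ hd
          _ ≤ 1 + s.card := add_le_add (hacyc_bound _ (hacyc a)) (ih hs)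
          _ = ((Finset.cons a s ha).card : ℝ) := by
              rw [Finset.card_cons]; push_cast; ring
  have hUuniv : (⋃ k ∈ (Finset.univ : Finset (Fin n)), P k) = Set.univ := by
    apply Set.eq_univ_of_forall
    intro m
    obtain ⟨k, hk, _⟩ := hcover m
    exact Set.mem_biUnion (Finset.mem_univ k) hk
  have hupper : DoF Set.univ ≤ n := by
    have := key Finset.univ (Finset.univ_nonempty_iff.mpr ⟨⟨0, hn⟩⟩)
    rwa [hUuniv, Finset.card_univ, Fintype.card_fin] at this
  -- lower bound: O has exactly n elements
  choose g hg hguniq using hOper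
  have hginj : Function.Injective g := by
    intro k k' h
    obtain ⟨j, _, hj⟩ := hcover (g k)
    have h1 := hj k (hg k).2
    have h2 := hj k' (h ▸ (hg k').2)
    exact h1.trans h2.symm
  have hOrange : O = Set.range g := by
    ext m
    constructor
    · intro hm
      obtain ⟨k, hk, _⟩ := hcover m
      exact ⟨k, (hguniq k m ⟨hm, hk⟩).symm⟩
    · rintro ⟨k, rfl⟩
      exact (hg k).1
  have hcard : O.ncard = n := by
    rw [hOrange, ← Set.image_univ, Set.ncard_image_of_injective _ hginj, Set.ncard_univ,
      Nat.card_eq_fintype_card, Fintype.card_fin]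
  have hlower : (n : ℝ) ≤ DoF Set.univ := by
    have := hach O hO
    rwa [hcard] at this
  linarith
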